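/- For every integer m ≥ 3, the homogeneous weight enumerator of the binary Reed–Muller code RM_2(m−2, m) equals (1/2^{m+1}) · ((x − y)^{2^m} + 2(2^m − 1)(x − y)^{2^{m−1}}(x + y)^{2^{m−1}} + (x + y)^{2^m}). -/

import Mathlib

open Finset

noncomputable def homWeightEnum (R : Type*) [CommRing R] {F : Type*} [Field F] [Fintype F]
    [DecidableEq F] {ι : Type*} [Fintype ι] (C : Submodule F (ι → F)) : MvPolynomial (Fin 2) R :=
  ∑ c ∈ (Set.toFinite (C : Set (ι → F))).toFinset,
    MvPolynomial.X 0 ^ (Fintype.card ι - hammingNorm c) * MvPolynomial.X 1 ^ hammingNorm c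

def RMCode (F : Type*) [CommSemiring F] (r m : ℕ) : Submodule F ((Fin m → F) → F) where
  carrier := {f | ∃ p : MvPolynomial (Fin m) F, p.totalDegree ≤ r ∧ ∀ v, MvPolynomial.eval v p = f v}
  zero_mem' := ⟨0, by simp⟩
  add_mem' := by
    rintro f g ⟨p, hp, hpe⟩ ⟨q, hq, hqe⟩
    exact ⟨p + q, le_trans (MvPolynomial.totalDegree_add p q) (max_le hp hq),
      fun v => by simp [hpe v, hqe v]⟩
  smul_mem' := by
    rintro c f ⟨p, hp, hpe⟩
    exact ⟨c • p, le_trans (MvPolynomial.totalDegree_smul_le c p) hp,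
      fun v => by simp [hpe v]⟩

/-! ### Auxiliary lemmas -/

section Aux

lemma zmod2_cases' (x : ZMod 2) : x = 0 ∨ x = 1 := by revert x; decide

lemma zmod2_pow' (x : ZMod 2) (k : ℕ) (hk : k ≠ 0) : x ^ k = x := by
  obtain ⟨k, rfl⟩ := Nat.exists_eq_succ_of_ne_zero hk
  rcases zmod2_cases' x with rfl | rfl <;> simp

lemma zmod2_sum_univ' {M : Type*} [AddCommMonoid M] (f : ZMod 2 → M) :
    ∑ x : ZMod 2, f x = f 0 + f 1 := Fin.sum_univ_two f

lemma sum_prod_vanish' {m : ℕ} (T : Finset (Fin m)) (hT : T ≠ univ) :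
    ∑ v : Fin m → ZMod 2, ∏ i ∈ T, v i = 0 := by
  have h1 : ∀ v : Fin m → ZMod 2, ∏ i ∈ T, v i = ∏ i : Fin m, (if i ∈ T then v i else 1) := by
    intro v; rw [Finset.prod_ite_mem, Finset.univ_inter]
  simp_rw [h1]
  rw [← Fintype.piFinset_univ,
    ← Finset.prod_univ_sum (fun _ => univ) (fun i t => if i ∈ T then t else (1 : ZMod 2))]
  obtain ⟨j, hj⟩ : ∃ j, j ∉ T := by
    by_contra h; push_neg at h; exact hT (Finset.eq_univ_iff_forall.2 h)
  apply Finset.prod_eq_zero (Finset.mem_univ j)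
  simp [hj, zmod2_sum_univ']; decide

lemma prod_mul_self' {m : ℕ} (T : Finset (Fin m)) (v : Fin m → ZMod 2) (j : Fin m) :
    (∏ i ∈ T, v i) * v j = ∏ i ∈ insert j T, v i := by
  by_cases hj : j ∈ T
  · rw [Finset.insert_eq_self.2 hj, ← Finset.mul_prod_erase T v hj]
    have : v j * v j = v j := by rcases zmod2_cases' (v j) with h | h <;> rw [h] <;> ring
    rw [mul_comm (v j), mul_assoc, this]
  · rw [Finset.prod_insert hj, mul_comm]

lemma card_support_le_totalDegree' {m : ℕ} (p : MvPolynomial (Fin m) (ZMod 2))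
    (d : Fin m →₀ ℕ) (hd : d ∈ p.support) : d.support.card ≤ p.totalDegree := by
  refine le_trans ?_ (MvPolynomial.le_totalDegree hd)
  rw [Finsupp.sum]
  calc d.support.card = ∑ i ∈ d.support, 1 := by simp
    _ ≤ ∑ i ∈ d.support, d i :=
        Finset.sum_le_sum fun i hi => Nat.one_le_iff_ne_zero.2 (Finsupp.mem_support_iff.1 hi)

lemma constraints_of_mem' {m : ℕ} (hm : 3 ≤ m) (f : (Fin m → ZMod 2) → ZMod 2)
    (hf : ∃ p : MvPolynomial (Fin m) (ZMod 2), p.totalDegree ≤ m - 2 ∧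
      ∀ v, MvPolynomial.eval v p = f v) :
    (∑ v, f v = 0) ∧ ∀ j, ∑ v, f v * v j = 0 := by
  obtain ⟨p, hdeg, hev⟩ := hf
  have hsupp : ∀ d ∈ p.support, (d : Fin m →₀ ℕ).support.card ≤ m - 2 :=
    fun d hd => le_trans (card_support_le_totalDegree' p d hd) hdeg
  have key : ∀ v, f v = ∑ d ∈ p.support, p.coeff d * ∏ i ∈ d.support, v i := by
    intro v
    rw [← hev v, MvPolynomial.eval_eq]
    refine Finset.sum_congr rfl fun d hd => ?_
    congr 1
    exact Finset.prod_congr rfl fun i hi => zmod2_pow' _ _ (Finsupp.mem_support_iff.1 hi)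
  constructor
  · simp_rw [key, Finset.sum_comm (s := Finset.univ), ← Finset.mul_sum]
    refine Finset.sum_eq_zero fun d hd => ?_
    rw [sum_prod_vanish' d.support, mul_zero]
    intro h
    have := hsupp d hd
    rw [h, Finset.card_univ, Fintype.card_fin] at this
    omega
  · intro j
    simp_rw [key, Finset.sum_mul, Finset.sum_comm (s := Finset.univ), mul_assoc, ← Finset.mul_sum]
    refine Finset.sum_eq_zero fun d hd => ?_
    simp_rw [prod_mul_self']
    rw [sum_prod_vanish' _, mul_zero]
    intro h
    have h2 := hsupp d hd
    have h3 : (insert j d.support).card ≤ d.support.card + 1 := Finset.card_insert_le _ _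
    rw [h, Finset.card_univ, Fintype.card_fin] at h3
    omega

lemma zmod2_delta' {m : ℕ} (v w : Fin m → ZMod 2) :
    (∏ i : Fin m, (v i + (1 + w i))) = if w = v then 1 else 0 := by
  split_ifs with h
  · subst h
    refine Finset.prod_eq_one fun i _ => ?_
    rcases zmod2_cases' (w i) with h | h <;> rw [h] <;> decide
  · obtain ⟨j, hj⟩ : ∃ j, w j ≠ v j := by
      by_contra hc; push_neg at hc; exact h (funext hc)
    apply Finset.prod_eq_zero (Finset.mem_univ j)
    rcases zmod2_cases' (w j) with h1 | h1 <;> rcases zmod2_cases' (v j) with h2 | h2 <;>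
      simp [h1, h2] at hj ⊢ <;> decide

noncomputable def cS' {m : ℕ} (f : (Fin m → ZMod 2) → ZMod 2) (S : Finset (Fin m)) : ZMod 2 :=
  ∑ w : Fin m → ZMod 2, f w * ∏ i ∈ Sᶜ, (1 + w i)

lemma mem_of_constraints' {m : ℕ} (f : (Fin m → ZMod 2) → ZMod 2)
    (h0 : ∑ v, f v = 0) (h1 : ∀ j, ∑ v, f v * v j = 0) :
    ∃ p : MvPolynomial (Fin m) (ZMod 2), p.totalDegree ≤ m - 2 ∧
      ∀ v, MvPolynomial.eval v p = f v := by
  classical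
  have hbig : ∀ S : Finset (Fin m), ¬ S.card ≤ m - 2 → cS' f S = 0 := by
    intro S hS
    have hle : S.card ≤ m := by simpa using Finset.card_le_univ S
    have hc : Sᶜ.card = m - S.card := by simp [Finset.card_compl]
    have hcard : Sᶜ.card ≤ 1 := by omega
    interval_cases h : Sᶜ.card
    · rw [Finset.card_eq_zero] at h
      unfold cS'
      rw [← h0]
      exact Finset.sum_congr rfl fun w _ => by rw [h, Finset.prod_empty, mul_one]
    · obtain ⟨j, hj⟩ := Finset.card_eq_one.1 h
      unfold cS'
      simp_rw [hj, Finset.prod_singleton, mul_add, mul_one, Finset.sum_add_distrib, h0, h1 j,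
        add_zero]
  refine ⟨∑ S ∈ Finset.univ.filter (fun S : Finset (Fin m) => S.card ≤ m - 2),
    MvPolynomial.C (cS' f S) * ∏ i ∈ S, MvPolynomial.X i, ?_, ?_⟩
  · refine le_trans (MvPolynomial.totalDegree_finset_sum _ _) (Finset.sup_le fun S hS => ?_)
    refine le_trans (MvPolynomial.totalDegree_mul _ _) ?_
    rw [MvPolynomial.totalDegree_C, zero_add]
    refine le_trans (MvPolynomial.totalDegree_finset_prod _ _) ?_
    simp only [MvPolynomial.totalDegree_X]
    simp only [Finset.mem_filter] at hS
    simpa using hS.2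
  · intro v
    simp only [map_sum, map_mul, MvPolynomial.eval_C, map_prod, MvPolynomial.eval_X]
    have hfull : ∑ S : Finset (Fin m), cS' f S * ∏ i ∈ S, v i = f v := by
      calc ∑ S : Finset (Fin m), cS' f S * ∏ i ∈ S, v i
          = ∑ S : Finset (Fin m), ∑ w : Fin m → ZMod 2,
              f w * ((∏ i ∈ S, v i) * ∏ i ∈ Sᶜ, (1 + w i)) := by
            refine Finset.sum_congr rfl fun S _ => ?_
            unfold cS'
            rw [Finset.sum_mul]
            exact Finset.sum_congr rfl fun w _ => by ring
        _ = ∑ w : Fin m → ZMod 2, f w * ∑ S : Finset (Fin m),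
              (∏ i ∈ S, v i) * ∏ i ∈ Finset.univ \ S, (1 + w i) := by
            rw [Finset.sum_comm]
            exact Finset.sum_congr rfl fun w _ => by
              rw [Finset.mul_sum]
              exact Finset.sum_congr rfl fun S _ => by rw [Finset.compl_eq_univ_sdiff]
        _ = ∑ w : Fin m → ZMod 2, f w * (if w = v then 1 else 0) := by
            refine Finset.sum_congr rfl fun w _ => ?_
            rw [← Finset.powerset_univ, ← Finset.prod_add, zmod2_delta']
        _ = f v := by simp
    rw [← Finset.sum_filter_add_sum_filter_not Finset.univ
      (fun S : Finset (Fin m) => S.card ≤ m - 2)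
      (fun S => cS' f S * ∏ i ∈ S, v i)] at hfull
    rw [← hfull]
    have : ∑ S ∈ Finset.univ.filter (fun S : Finset (Fin m) => ¬ S.card ≤ m - 2),
        cS' f S * ∏ i ∈ S, v i = 0 := by
      refine Finset.sum_eq_zero fun S hS => ?_
      rw [hbig S (Finset.mem_filter.1 hS).2, zero_mul]
    rw [this, add_zero]

/-! ### Characters -/

noncomputable def chi' (x : ZMod 2) : ℂ := ((if x = 0 then 1 else -1 : ℤ) : ℂ)

lemma chi_add' (x y : ZMod 2) : chi' (x + y) = chi' x * chi' y := by
  unfold chi'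
  rw [← Int.cast_mul]
  congr 1
  revert x y; decide

lemma chi_zero' : chi' 0 = 1 := by unfold chi'; norm_num
lemma chi_one' : chi' 1 = -1 := by unfold chi'; norm_num

lemma chi_sum' {α : Type*} (s : Finset α) (h : α → ZMod 2) :
    chi' (∑ x ∈ s, h x) = ∏ x ∈ s, chi' (h x) := by
  classical
  induction s using Finset.induction with
  | empty => simp [chi_zero']
  | @insert a s' hx ih => rw [Finset.sum_insert hx, Finset.prod_insert hx, chi_add', ih]

lemma chi_mul_sum' (c : ZMod 2) : ∑ t : ZMod 2, chi' (t * c) = if c = 0 then 2 else 0 := by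
  rw [zmod2_sum_univ' (fun t => chi' (t * c))]
  rcases (by revert c; decide : c = 0 ∨ c = 1) with rfl | rfl <;>
    simp [chi_zero', chi_one', chi'] <;> norm_num

lemma char_sum_eq' {m : ℕ} (s : ZMod 2) (t : Fin m → ZMod 2) :
    ∑ a : ZMod 2, ∑ b : Fin m → ZMod 2, chi' (a * s + ∑ i, b i * t i) =
      if s = 0 ∧ ∀ i, t i = 0 then (2 : ℂ) ^ (m + 1) else 0 := by
  classical
  have key : ∀ a : ZMod 2, ∑ b : Fin m → ZMod 2, chi' (a * s + ∑ i, b i * t i)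
      = chi' (a * s) * ∏ i : Fin m, (if t i = 0 then 2 else 0) := by
    intro a
    simp_rw [chi_add', chi_sum' Finset.univ]
    rw [← Finset.mul_sum]
    congr 1
    rw [← Fintype.piFinset_univ,
      ← Finset.prod_univ_sum (fun _ => Finset.univ) (fun i u => chi' (u * t i))]
    exact Finset.prod_congr rfl fun i _ => chi_mul_sum' (t i)
  simp_rw [key]
  rw [← Finset.sum_mul]
  by_cases ht : ∀ i, t i = 0
  · simp only [ht, if_true, Finset.prod_const, Finset.card_univ, Fintype.card_fin]
    by_cases hs : s = 0
    · simp only [hs, if_pos (And.intro hs ht)]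
      simp [chi_mul_sum', chi_zero']
      ring
    · rw [if_neg (by tauto)]
      have : ∑ a : ZMod 2, chi' (a * s) = 0 := by rw [chi_mul_sum', if_neg hs]
      rw [this, zero_mul]
  · rw [if_neg (by tauto)]
    obtain ⟨i, hi⟩ := not_forall.1 ht
    rw [Finset.prod_eq_zero (Finset.mem_univ i) (by rw [if_neg hi]), mul_zero]

/-! ### Product formula -/

lemma step_D' {m : ℕ} (g : (Fin m → ZMod 2) → ZMod 2) :
    ∑ f : (Fin m → ZMod 2) → ZMod 2,
      MvPolynomial.C (chi' (∑ v, g v * f v)) *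
        (MvPolynomial.X 0 ^ (2 ^ m - hammingNorm f) * MvPolynomial.X 1 ^ hammingNorm f :
          MvPolynomial (Fin 2) ℂ) =
    ∏ v : Fin m → ZMod 2,
      (MvPolynomial.C (chi' (g v)) * MvPolynomial.X 1 + MvPolynomial.X 0) := by
  classical
  rw [Finset.prod_add, Finset.powerset_univ]
  refine Finset.sum_nbij' (i := fun f => Finset.univ.filter (fun v => f v ≠ 0))
    (j := fun T => fun v => if v ∈ T then (1 : ZMod 2) else 0)
    (fun _ _ => Finset.mem_univ _) (fun _ _ => Finset.mem_univ _)
    ?_ ?_ ?_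
  · intro f _
    funext v
    by_cases h : f v = 0
    · simp [h]
    · rcases zmod2_cases' (f v) with h' | h'
      · exact absurd h' h
      · simp [h, h']
  · intro T _
    ext v
    simp
  · intro f _
    have h1 : (∑ v, g v * f v) = ∑ v ∈ Finset.univ.filter (fun v => f v ≠ 0), g v := by
      rw [← Finset.sum_filter_of_ne (f := fun v => g v * f v) (p := fun v => f v ≠ 0)
        (fun v _ h hf => h (by simp [hf]))]
      refine Finset.sum_congr rfl fun v hv => ?_
      simp only [Finset.mem_filter] at hv
      rcases zmod2_cases' (f v) with h' | h'
      · exact absurd h' hv.2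
      · rw [h', mul_one]
    have h2 : hammingNorm f = (Finset.univ.filter (fun v => f v ≠ 0)).card := rfl
    rw [h1, chi_sum', h2]
    rw [Finset.prod_mul_distrib, Finset.prod_const, Finset.prod_const, map_prod]
    have hcard : 2 ^ m - (Finset.univ.filter (fun v => f v ≠ 0)).card
        = (Finset.univ \ Finset.univ.filter (fun v => f v ≠ 0)).card := by
      rw [Finset.card_sdiff_of_subset (Finset.subset_univ _), Finset.card_univ]
      congr 1
      simp [Fintype.card_fun]
    rw [hcard]
    ring

lemma step_E' {m : ℕ} (g : (Fin m → ZMod 2) → ZMod 2) :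
    ∏ v : Fin m → ZMod 2,
      (MvPolynomial.C (chi' (g v)) * MvPolynomial.X 1 + MvPolynomial.X 0 :
        MvPolynomial (Fin 2) ℂ) =
      (MvPolynomial.X 0 + MvPolynomial.X 1) ^ (2 ^ m - hammingNorm g) *
        (MvPolynomial.X 0 - MvPolynomial.X 1) ^ hammingNorm g := by
  classical
  rw [← Finset.prod_filter_mul_prod_filter_not Finset.univ (fun v => g v ≠ 0)]
  have h1 : ∏ v ∈ Finset.univ.filter (fun v => g v ≠ 0),
      (MvPolynomial.C (chi' (g v)) * MvPolynomial.X 1 + MvPolynomial.X 0 :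
        MvPolynomial (Fin 2) ℂ) =
      (MvPolynomial.X 0 - MvPolynomial.X 1) ^ hammingNorm g := by
    rw [show hammingNorm g = (Finset.univ.filter (fun v => g v ≠ 0)).card from rfl,
      ← Finset.prod_const]
    refine Finset.prod_congr rfl fun v hv => ?_
    simp only [Finset.mem_filter] at hv
    rcases zmod2_cases' (g v) with h | h
    · exact absurd h hv.2
    · rw [h, chi_one', map_neg, map_one]
      ring
  have h2 : ∏ v ∈ Finset.univ.filter (fun v => ¬ g v ≠ 0),
      (MvPolynomial.C (chi' (g v)) * MvPolynomial.X 1 + MvPolynomial.X 0 :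
        MvPolynomial (Fin 2) ℂ) =
      (MvPolynomial.X 0 + MvPolynomial.X 1) ^ (2 ^ m - hammingNorm g) := by
    have hc : (Finset.univ.filter (fun v => ¬ g v ≠ 0)).card = 2 ^ m - hammingNorm g := by
      have := Finset.card_filter_add_card_filter_not
        (s := (Finset.univ : Finset (Fin m → ZMod 2))) (fun v => g v ≠ 0)
      rw [Finset.card_univ] at this
      have hn : Fintype.card (Fin m → ZMod 2) = 2 ^ m := by simp [Fintype.card_fun]
      rw [show hammingNorm g = (Finset.univ.filter (fun v => g v ≠ 0)).card from rfl]
      omega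
    rw [← hc, ← Finset.prod_const]
    refine Finset.prod_congr rfl fun v hv => ?_
    simp only [Finset.mem_filter, not_not] at hv
    rw [hv.2, chi_zero', map_one]
    ring
  rw [h1, h2]
  ring

/-! ### Affine functions and their weights -/

def gab' {m : ℕ} (a : ZMod 2) (b : Fin m → ZMod 2) : (Fin m → ZMod 2) → ZMod 2 :=
  fun v => a + ∑ i, b i * v i

lemma wt_gab_00' {m : ℕ} : hammingNorm (gab' (0 : ZMod 2) (0 : Fin m → ZMod 2)) = 0 := by
  simp [hammingNorm, gab']

lemma wt_gab_10' {m : ℕ} : hammingNorm (gab' (1 : ZMod 2) (0 : Fin m → ZMod 2)) = 2 ^ m := by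
  simp [hammingNorm, gab', Finset.filter_true_of_mem, Fintype.card_fun]

lemma wt_gab_ne' {m : ℕ} (hm : 1 ≤ m) (a : ZMod 2) (b : Fin m → ZMod 2) (hb : b ≠ 0) :
    hammingNorm (gab' a b) = 2 ^ (m - 1) := by
  classical
  obtain ⟨j, hj⟩ : ∃ j, b j ≠ 0 := by
    by_contra h; push_neg at h; exact hb (funext h)
  have hbj : b j = 1 := by rcases zmod2_cases' (b j) with h | h; exact absurd h hj; exact h
  set σ : (Fin m → ZMod 2) → (Fin m → ZMod 2) := fun v => Function.update v j (v j + 1) with hσ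
  have hflip : ∀ v, gab' a b (σ v) = gab' a b v + 1 := by
    intro v
    unfold gab'
    have h1 : ∀ i, b i * (σ v) i = b i * v i + (if i = j then 1 else 0) := by
      intro i
      by_cases h : i = j
      · subst h; simp [hσ, Function.update_self, hbj]
      · simp [hσ, Function.update_of_ne h, h]
    simp_rw [h1, Finset.sum_add_distrib, Finset.sum_ite_eq' Finset.univ j,
      if_pos (Finset.mem_univ j)]
    ring
  have hσσ : ∀ v, σ (σ v) = v := by
    intro v
    funext i
    by_cases h : i = j
    · subst h
      simp [hσ, Function.update_self]
      rcases zmod2_cases' (v i) with h' | h' <;> rw [h'] <;> decide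
    · simp [hσ, Function.update_of_ne h]
  have hcard : (Finset.univ.filter (fun v => gab' a b v ≠ 0)).card
      = (Finset.univ.filter (fun v => ¬ gab' a b v ≠ 0)).card := by
    refine Finset.card_nbij' σ σ ?_ ?_ (fun v _ => hσσ v) (fun v _ => hσσ v)
    · intro v hv
      simp only [Finset.mem_coe, Finset.mem_filter, not_not] at hv ⊢
      refine ⟨Finset.mem_univ _, ?_⟩
      rw [hflip]
      rcases zmod2_cases' (gab' a b v) with h | h
      · exact absurd h hv.2
      · rw [h]; decide
    · intro v hv
      simp only [Finset.mem_coe, Finset.mem_filter, not_not] at hv ⊢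
      refine ⟨Finset.mem_univ _, ?_⟩
      rw [hflip, hv.2]
      decide
  have htot := Finset.card_filter_add_card_filter_not
    (s := (Finset.univ : Finset (Fin m → ZMod 2))) (fun v => gab' a b v ≠ 0)
  rw [Finset.card_univ] at htot
  have hn : Fintype.card (Fin m → ZMod 2) = 2 ^ m := by simp [Fintype.card_fun]
  have hm2 : 2 ^ m = 2 * 2 ^ (m - 1) := by
    conv_lhs => rw [show m = (m - 1) + 1 by omega]
    ring
  show (Finset.univ.filter (fun v => gab' a b v ≠ 0)).card = 2 ^ (m - 1)
  omega

lemma bilin' {m : ℕ} (f : (Fin m → ZMod 2) → ZMod 2) (a : ZMod 2) (b : Fin m → ZMod 2) :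
    a * (∑ v, f v) + ∑ i, b i * (∑ v, f v * v i) = ∑ v, gab' a b v * f v := by
  unfold gab'
  calc a * (∑ v, f v) + ∑ i, b i * (∑ v, f v * v i)
      = ∑ v, a * f v + ∑ i, ∑ v, b i * (f v * v i) := by
        rw [Finset.mul_sum]
        congr 1
        exact Finset.sum_congr rfl fun i _ => Finset.mul_sum _ _ _
    _ = ∑ v, a * f v + ∑ v, ∑ i, b i * (f v * v i) := by rw [Finset.sum_comm]
    _ = ∑ v, (a + ∑ i, b i * v i) * f v := by
        rw [← Finset.sum_add_distrib]
        refine Finset.sum_congr rfl fun v _ => ?_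
        rw [add_mul]
        congr 1
        rw [Finset.sum_mul]
        exact Finset.sum_congr rfl fun i _ => by ring

end Aux

/-- the homogeneous weight enumerator of the binary Reed–Muller code
`RM₂(m-2, m)`, for `m ≥ 3`. -/
theorem homWeightEnum_RM_dual (m : ℕ) (hm : 3 ≤ m) :
    homWeightEnum ℂ (RMCode (ZMod 2) (m - 2) m) =
      MvPolynomial.C (((2 : ℂ) ^ (m + 1))⁻¹) *
        ((MvPolynomial.X 0 - MvPolynomial.X 1) ^ (2 ^ m) +
          MvPolynomial.C (2 * ((2 : ℂ) ^ m - 1)) *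
            ((MvPolynomial.X 0 - MvPolynomial.X 1) ^ (2 ^ (m - 1)) *
              (MvPolynomial.X 0 + MvPolynomial.X 1) ^ (2 ^ (m - 1))) +
          (MvPolynomial.X 0 + MvPolynomial.X 1) ^ (2 ^ m)) := by
  classical
  have hn : Fintype.card (Fin m → ZMod 2) = 2 ^ m := by simp [Fintype.card_fun]
  set P : ((Fin m → ZMod 2) → ZMod 2) → Prop :=
    fun f => (∑ v, f v = 0) ∧ ∀ j, ∑ v, f v * v j = 0 with hP
  unfold homWeightEnum
  have hset : (Set.toFinite ((RMCode (ZMod 2) (m - 2) m :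
        Submodule (ZMod 2) ((Fin m → ZMod 2) → ZMod 2)) :
        Set ((Fin m → ZMod 2) → ZMod 2))).toFinset = Finset.univ.filter P := by
    ext f
    simp only [Set.Finite.mem_toFinset, SetLike.mem_coe, Finset.mem_filter, Finset.mem_univ,
      true_and]
    constructor
    · exact fun h => constraints_of_mem' hm f h
    · exact fun h => mem_of_constraints' f h.1 h.2
  rw [hset]
  simp only [hn]
  -- introduce the character sum
  calc ∑ f ∈ Finset.univ.filter P,
        (MvPolynomial.X 0 ^ (2 ^ m - hammingNorm f) * MvPolynomial.X 1 ^ hammingNorm f :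
          MvPolynomial (Fin 2) ℂ)
      = ∑ f : (Fin m → ZMod 2) → ZMod 2,
          MvPolynomial.C (((2 : ℂ) ^ (m + 1))⁻¹ * (if P f then (2 : ℂ) ^ (m + 1) else 0)) *
            (MvPolynomial.X 0 ^ (2 ^ m - hammingNorm f) * MvPolynomial.X 1 ^ hammingNorm f) := by
        rw [Finset.sum_filter]
        refine Finset.sum_congr rfl fun f _ => ?_
        split_ifs with h
        · rw [inv_mul_cancel₀ (pow_ne_zero _ two_ne_zero), map_one, one_mul]
        · rw [mul_zero, map_zero, zero_mul]
    _ = MvPolynomial.C (((2 : ℂ) ^ (m + 1))⁻¹) *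
          ∑ f : (Fin m → ZMod 2) → ZMod 2, ∑ a : ZMod 2, ∑ b : Fin m → ZMod 2,
            MvPolynomial.C (chi' (∑ v, gab' a b v * f v)) *
              (MvPolynomial.X 0 ^ (2 ^ m - hammingNorm f) *
                MvPolynomial.X 1 ^ hammingNorm f) := by
        rw [Finset.mul_sum]
        refine Finset.sum_congr rfl fun f _ => ?_
        have h2 : (if P f then (2 : ℂ) ^ (m + 1) else 0) =
            ∑ a : ZMod 2, ∑ b : Fin m → ZMod 2,
              chi' (a * (∑ v, f v) + ∑ i, b i * (∑ v, f v * v i)) := by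
          rw [char_sum_eq']
        rw [h2, map_mul, mul_assoc]
        congr 1
        simp_rw [bilin' f]
        rw [map_sum, Finset.sum_mul]
        refine Finset.sum_congr rfl fun a _ => ?_
        rw [map_sum, Finset.sum_mul]
    _ = MvPolynomial.C (((2 : ℂ) ^ (m + 1))⁻¹) *
          ∑ a : ZMod 2, ∑ b : Fin m → ZMod 2,
            (MvPolynomial.X 0 + MvPolynomial.X 1) ^ (2 ^ m - hammingNorm (gab' a b)) *
              (MvPolynomial.X 0 - MvPolynomial.X 1) ^ hammingNorm (gab' a b) := by
        congr 1
        rw [Finset.sum_comm]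
        refine Finset.sum_congr rfl fun a _ => ?_
        rw [Finset.sum_comm]
        refine Finset.sum_congr rfl fun b _ => ?_
        rw [step_D', step_E']
    _ = MvPolynomial.C (((2 : ℂ) ^ (m + 1))⁻¹) *
        ((MvPolynomial.X 0 - MvPolynomial.X 1) ^ (2 ^ m) +
          MvPolynomial.C (2 * ((2 : ℂ) ^ m - 1)) *
            ((MvPolynomial.X 0 - MvPolynomial.X 1) ^ (2 ^ (m - 1)) *
              (MvPolynomial.X 0 + MvPolynomial.X 1) ^ (2 ^ (m - 1))) +
          (MvPolynomial.X 0 + MvPolynomial.X 1) ^ (2 ^ m)) := by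
        congr 1
        have hsub : 2 ^ m - 2 ^ (m - 1) = 2 ^ (m - 1) := by
          have : 2 ^ m = 2 * 2 ^ (m - 1) := by
            conv_lhs => rw [show m = (m - 1) + 1 by omega]
            ring
          omega
        have hsplit : ∀ a : ZMod 2,
            ∑ b : Fin m → ZMod 2,
              (MvPolynomial.X 0 + MvPolynomial.X 1 : MvPolynomial (Fin 2) ℂ) ^
                  (2 ^ m - hammingNorm (gab' a b)) *
                (MvPolynomial.X 0 - MvPolynomial.X 1) ^ hammingNorm (gab' a b) =
            (MvPolynomial.X 0 + MvPolynomial.X 1) ^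
                  (2 ^ m - hammingNorm (gab' a (0 : Fin m → ZMod 2))) *
                (MvPolynomial.X 0 - MvPolynomial.X 1) ^
                  hammingNorm (gab' a (0 : Fin m → ZMod 2)) +
              (2 ^ m - 1 : ℕ) •
                ((MvPolynomial.X 0 + MvPolynomial.X 1) ^ (2 ^ (m - 1)) *
                  (MvPolynomial.X 0 - MvPolynomial.X 1) ^ (2 ^ (m - 1))) := by
          intro a
          rw [← Finset.add_sum_erase _ _ (Finset.mem_univ (0 : Fin m → ZMod 2))]
          congr 1
          have hb' : ∀ b ∈ Finset.univ.erase (0 : Fin m → ZMod 2),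
              (MvPolynomial.X 0 + MvPolynomial.X 1) ^ (2 ^ m - hammingNorm (gab' a b)) *
                (MvPolynomial.X 0 - MvPolynomial.X 1) ^ hammingNorm (gab' a b) =
              (MvPolynomial.X 0 + MvPolynomial.X 1 : MvPolynomial (Fin 2) ℂ) ^ (2 ^ (m - 1)) *
                (MvPolynomial.X 0 - MvPolynomial.X 1) ^ (2 ^ (m - 1)) := by
            intro b hb
            rw [wt_gab_ne' (by omega) a b (Finset.mem_erase.1 hb).1, hsub]
          rw [Finset.sum_congr rfl hb', Finset.sum_const,
            Finset.card_erase_of_mem (Finset.mem_univ _), Finset.card_univ, hn]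
        rw [zmod2_sum_univ', hsplit 0, hsplit 1, wt_gab_00', wt_gab_10', Nat.sub_self,
          Nat.sub_zero, pow_zero, pow_zero, mul_one, one_mul, nsmul_eq_mul]
        have hcast : ((2 ^ m - 1 : ℕ) : MvPolynomial (Fin 2) ℂ) =
            MvPolynomial.C ((2 : ℂ) ^ m - 1) := by
          have h1 : (1 : ℕ) ≤ 2 ^ m := Nat.one_le_two_pow
          push_cast [h1]
          simp [map_sub, map_pow, map_one, map_ofNat]
        rw [hcast]
        have hC2 : (MvPolynomial.C (2 * ((2 : ℂ) ^ m - 1)) : MvPolynomial (Fin 2) ℂ) =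
            2 * MvPolynomial.C ((2 : ℂ) ^ m - 1) := by
          rw [map_mul, map_ofNat]
        rw [hC2]
        ring
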